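/- For 1 ≤ p ≤ 2 and all real u, v: 2(|u|^p + |v|^p) ≥ |u+v|^p + |u-v|^p. -/
import Mathlib

open Real
open scoped NNReal

lemma aux_sub (x y q : ℝ) (hx : 0 ≤ x) (hy : 0 ≤ y) (hq0 : 0 ≤ q) (hq1 : q ≤ 1) :
    (x + y) ^ q ≤ x ^ q + y ^ q := by
  have h := NNReal.rpow_add_le_add_rpow x.toNNReal y.toNNReal hq0 hq1
  have h' : ((x.toNNReal + y.toNNReal : ℝ≥0) : ℝ) ^ q ≤
      ((x.toNNReal : ℝ)) ^ q + ((y.toNNReal : ℝ)) ^ q := by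
    push_cast [← NNReal.coe_rpow]
    exact_mod_cast h
  simpa [Real.coe_toNNReal x hx, Real.coe_toNNReal y hy] using h'

lemma aux_conc (x y q : ℝ) (hx : 0 ≤ x) (hy : 0 ≤ y) (hq0 : 0 < q) (hq1 : q ≤ 1) :
    x ^ q + y ^ q ≤ 2 ^ (1 - q) * (x + y) ^ q := by
  have hp : 1 ≤ 1 / q := (one_le_div hq0).2 hq1
  have h := NNReal.rpow_add_le_mul_rpow_add_rpow (x.toNNReal ^ q) (y.toNNReal ^ q) hp
  have hxq : (x.toNNReal ^ q : ℝ≥0) ^ (1/q) = x.toNNReal := by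
    rw [← NNReal.rpow_mul, mul_one_div, div_self hq0.ne', NNReal.rpow_one]
  have hyq : (y.toNNReal ^ q : ℝ≥0) ^ (1/q) = y.toNNReal := by
    rw [← NNReal.rpow_mul, mul_one_div, div_self hq0.ne', NNReal.rpow_one]
  rw [hxq, hyq] at h
  -- h : (x^q + y^q)^(1/q) ≤ 2^(1/q - 1) * (x + y) in ℝ≥0
  have hR : (x ^ q + y ^ q) ^ (1/q) ≤ (2:ℝ) ^ (1/q - 1) * (x + y) := by
    have := (NNReal.coe_le_coe.2 h)
    push_cast [NNReal.coe_rpow] at this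
    simpa [Real.coe_toNNReal x hx, Real.coe_toNNReal y hy] using this
  have hsum : 0 ≤ x ^ q + y ^ q := by positivity
  calc x ^ q + y ^ q = ((x ^ q + y ^ q) ^ (1/q)) ^ q := by
        rw [← Real.rpow_mul hsum, one_div, inv_mul_cancel₀ hq0.ne', Real.rpow_one]
    _ ≤ ((2:ℝ) ^ (1/q - 1) * (x + y)) ^ q := by
        apply Real.rpow_le_rpow (by positivity) hR hq0.le
    _ = 2 ^ (1 - q) * (x + y) ^ q := by
        rw [Real.mul_rpow (by positivity) (by positivity),
          ← Real.rpow_mul (by norm_num : (0:ℝ) ≤ 2)]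
        congr 2
        field_simp

/-- Parallelogram-type inequality for `1 ≤ p ≤ 2`. -/
theorem stmt12 (p : ℝ) (hp : 1 ≤ p) (hp2 : p ≤ 2) (u v : ℝ) :
    |u + v| ^ p + |u - v| ^ p ≤ 2 * (|u| ^ p + |v| ^ p) := by
  set q := p / 2 with hq
  have hq0 : 0 < q := by positivity
  have hq1 : q ≤ 1 := by rw [hq]; linarith
  have key : ∀ a : ℝ, |a| ^ p = (a ^ 2) ^ q := by
    intro a
    rw [← sq_abs, ← Real.rpow_natCast |a| 2, ← Real.rpow_mul (abs_nonneg a)]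
    norm_num [hq]
    ring_nf
  have hpar : (u + v) ^ 2 + (u - v) ^ 2 = 2 * (u ^ 2 + v ^ 2) := by ring
  rw [key (u+v), key (u-v), key u, key v]
  calc ((u+v)^2) ^ q + ((u-v)^2) ^ q
      ≤ 2 ^ (1 - q) * ((u+v)^2 + (u-v)^2) ^ q :=
        aux_conc _ _ q (sq_nonneg _) (sq_nonneg _) hq0 hq1
    _ = 2 ^ (1 - q) * (2 * (u^2 + v^2)) ^ q := by rw [hpar]
    _ = 2 * (u^2 + v^2) ^ q := by
        rw [Real.mul_rpow (by norm_num) (by positivity), ← mul_assoc,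
          ← Real.rpow_add (by norm_num : (0:ℝ) < 2)]
        norm_num
    _ ≤ 2 * ((u^2) ^ q + (v^2) ^ q) := by
        have := aux_sub (u^2) (v^2) q (sq_nonneg _) (sq_nonneg _) hq0.le hq1
        linarith
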